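/- arXiv:2208.00579 — 2 statements merged into one kernel-verified Lean document; each statement's English description precedes it below -/
import Mathlib

section
/- Let φ(q_i), φ(k_1), …, φ(k_N) be vectors in ℝ^D, v_1, …, v_N vectors in ℝ^{D_v}, γ > 0 and 0 ≤ β < 1. Define the recurrences m_i = β m_{i−1} − φ(k_i)v_iᵀ, s_i = s_{i−1} − γ m_i, z_i = z_{i−1} + φ(k_i), with m₀ = 0 ∈ ℝ^{D×D_v}, s₀ = 0 ∈ ℝ^{D×D_v}, z₀ = 0 ∈ ℝ^D. Suppose φ(q_i)ᵀ z_i ≠ 0. Then the RNN causal momentum attention output v̂_i = (φ(q_i)ᵀ s_i) / (φ(q_i)ᵀ z_i) equals the closed-form causal momentum attention v̂_i = γ φ(q_i)ᵀ ∑_{j=1}^{i} ( (1 − β^{i−j+1})/(1 − β) φ(k_j)v_jᵀ ) / ( φ(q_i)ᵀ ∑_{j=1}^{i} φ(k_j) ). -/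
open Matrix

lemma my_vecMul_smul {D Dv : ℕ} (x : Fin D → ℝ) (c : ℝ) (M : Matrix (Fin D) (Fin Dv) ℝ) :
    Matrix.vecMul x (c • M) = c • Matrix.vecMul x M := by
  ext j
  simp [Matrix.vecMul, dotProduct, Finset.mul_sum]
  exact Finset.sum_congr rfl fun k _ => by ring

lemma my_vecMul_sum {D Dv : ℕ} (x : Fin D → ℝ) (t : Finset ℕ)
    (f : ℕ → Matrix (Fin D) (Fin Dv) ℝ) :
    Matrix.vecMul x (∑ j ∈ t, f j) = ∑ j ∈ t, Matrix.vecMul x (f j) := by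
  classical
  induction t using Finset.induction_on with
  | empty => simp
  | insert a t h ih => simp [Finset.sum_insert h, Matrix.vecMul_add, ih]

/-- The RNN formulation of causal momentum attention
(states `m_i = β m_{i-1} - φ(k_i)v_iᵀ`, `s_i = s_{i-1} - γ m_i`,
`z_i = z_{i-1} + φ(k_i)` with zero initialization, output
`v̂_i = (φ(q_i)ᵀ s_i)/(φ(q_i)ᵀ z_i)`) agrees with the closed-form causal
momentum attention
`v̂_i = γ φ(q_i)ᵀ ∑_{j=1}^i ((1-β^{i-j+1})/(1-β)) φ(k_j)v_jᵀ / (φ(q_i)ᵀ ∑_{j=1}^i φ(k_j))`,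
provided the denominator `φ(q_i)ᵀ z_i` is nonzero. -/
theorem rnn_causal_momentum_attention_eq_closed_form {D Dv : ℕ}
    (fq : Fin D → ℝ) (fk : ℕ → Fin D → ℝ) (v : ℕ → Fin Dv → ℝ)
    (γ β : ℝ) (hγ : 0 < γ) (hβ0 : 0 ≤ β) (hβ1 : β < 1)
    (m s : ℕ → Matrix (Fin D) (Fin Dv) ℝ) (z : ℕ → Fin D → ℝ)
    (hm0 : m 0 = 0) (hs0 : s 0 = 0) (hz0 : z 0 = 0)
    (hm : ∀ j, 1 ≤ j → m j = β • m (j - 1) - Matrix.vecMulVec (fk j) (v j))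
    (hs : ∀ j, 1 ≤ j → s j = s (j - 1) - γ • m j)
    (hz : ∀ j, 1 ≤ j → z j = z (j - 1) + fk j)
    (i : ℕ) (hi : 1 ≤ i)
    (hden : fq ⬝ᵥ z i ≠ 0) :
    (fq ⬝ᵥ z i)⁻¹ • Matrix.vecMul fq (s i) =
      (fq ⬝ᵥ ∑ j ∈ Finset.Icc 1 i, fk j)⁻¹ •
        (γ • Matrix.vecMul fq (∑ j ∈ Finset.Icc 1 i,
          ((1 - β ^ (i - j + 1)) / (1 - β)) • Matrix.vecMulVec (fk j) (v j))) := by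
  have hβne : (1 : ℝ) - β ≠ 0 := by linarith
  set A : ℕ → Matrix (Fin D) (Fin Dv) ℝ := fun j => Matrix.vecMulVec (fk j) (v j) with hA
  -- closed form for z
  have hzz : ∀ n, z n = ∑ j ∈ Finset.Icc 1 n, fk j := by
    intro n
    induction n with
    | zero => simp [hz0]
    | succ n ih =>
      rw [hz (n + 1) (Nat.le_add_left 1 n), Nat.add_sub_cancel, ih,
        Finset.sum_Icc_succ_top (Nat.le_add_left 1 n)]
  -- closed form for m
  have hmm : ∀ n, m n = -∑ j ∈ Finset.Icc 1 n, β ^ (n - j) • A j := by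
    intro n
    induction n with
    | zero => simp [hm0]
    | succ n ih =>
      rw [hm (n + 1) (Nat.le_add_left 1 n), Nat.add_sub_cancel, ih,
        Finset.sum_Icc_succ_top (Nat.le_add_left 1 n)]
      rw [Nat.sub_self, pow_zero, one_smul, neg_add, smul_neg, Finset.smul_sum]
      rw [sub_eq_add_neg]
      congr 1
      rw [neg_inj]
      apply Finset.sum_congr rfl
      intro j hj
      rw [Finset.mem_Icc] at hj
      rw [smul_smul]
      congr 1
      have : n + 1 - j = (n - j) + 1 := by omega
      rw [this, pow_succ']
  -- closed form for s
  have hss : ∀ n, s n = γ • ∑ j ∈ Finset.Icc 1 n,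
      ((1 - β ^ (n - j + 1)) / (1 - β)) • A j := by
    intro n
    induction n with
    | zero => simp [hs0]
    | succ n ih =>
      rw [hs (n + 1) (Nat.le_add_left 1 n), Nat.add_sub_cancel, ih,
        hmm (n + 1), Finset.sum_Icc_succ_top (Nat.le_add_left 1 n),
        Finset.sum_Icc_succ_top (Nat.le_add_left 1 n)]
      rw [Nat.sub_self, smul_neg, sub_neg_eq_add, ← smul_add]
      congr 1
      rw [pow_zero, one_smul, ← add_assoc, ← Finset.sum_add_distrib]
      congr 1
      · apply Finset.sum_congr rfl
        intro j hj
        rw [Finset.mem_Icc] at hj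
        rw [← add_smul]
        congr 1
        have h1 : n + 1 - j + 1 = (n - j + 1) + 1 := by omega
        have h2 : n + 1 - j = n - j + 1 := by omega
        rw [h1, h2, pow_succ]
        field_simp
        ring
      · rw [show ((1 - β ^ (0 + 1)) / (1 - β)) = 1 by rw [zero_add, pow_one]; field_simp,
          one_smul]
  rw [hzz, hss, my_vecMul_smul]
end

section
/- Let f(x) = (1/2)xᵀAx + xᵀb with A ∈ ℝ^{d×d} symmetric positive definite, smallest eigenvalue ν > 0 and largest eigenvalue L, and let x* = −A⁻¹b. If {x^k}_{k≥0} is generated by the heavy ball method x^{k+1} = x^k − γ∇f(x^k) + β(x^k − x^{k−1}) with step size 0 < γ ≤ 1/L and momentum 0 ≤ β < 1, then x^k converges to x* as k → ∞. -/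
open Matrix Filter


set_option maxHeartbeats 1000000 in
lemma hb_scalar (β c : ℝ) (hβ0 : 0 ≤ β) (hβ1 : β < 1) (hc0 : 0 < c) (hc1 : c ≤ 1)
    (e : ℕ → ℝ) (he : ∀ k, 1 ≤ k → e (k+1) = (1+β-c) * e k - β * e (k-1)) :
    Tendsto e atTop (nhds 0) := by
  obtain ⟨a, ha_def⟩ : ∃ a : ℝ, a = 1 + β - c := ⟨_, rfl⟩
  obtain ⟨t, ht_def⟩ : ∃ t : ℝ, t = (max (Real.sqrt β) (1 - c/2) + 1) / 2 := ⟨_, rfl⟩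
  have hsβ : Real.sqrt β < 1 := by
    rw [show (1:ℝ) = Real.sqrt 1 by simp]
    exact Real.sqrt_lt_sqrt hβ0 hβ1
  have hsβ0 : 0 ≤ Real.sqrt β := Real.sqrt_nonneg β
  have hsβsq : Real.sqrt β ^ 2 = β := Real.sq_sqrt hβ0
  have ht1 : t < 1 := by
    have : max (Real.sqrt β) (1 - c/2) < 1 := by
      apply max_lt hsβ; linarith
    rw [ht_def]; linarith
  have ht2 : (1:ℝ)/2 ≤ t := by
    have : 1 - c/2 ≤ max (Real.sqrt β) (1 - c/2) := le_max_right _ _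
    rw [ht_def]; linarith
  have ht0 : 0 < t := by linarith
  have htc : 1 - c/4 ≤ t := by
    have : 1 - c/2 ≤ max (Real.sqrt β) (1 - c/2) := le_max_right _ _
    rw [ht_def]; linarith
  have htsβ : (Real.sqrt β + 1)/2 ≤ t := by
    have : Real.sqrt β ≤ max (Real.sqrt β) (1 - c/2) := le_max_left _ _
    rw [ht_def]; linarith
  have htβ : β ≤ t := by nlinarith
  -- key inequality
  have hkey : a * t < t^2 + β := by
    have h2 : (1-t)*(t-β) ≤ (1-t)*1 :=
      mul_le_mul_of_nonneg_left (by linarith) (by linarith)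
    have h3 : c*(1/2) ≤ c*t := mul_le_mul_of_nonneg_left ht2 hc0.le
    rw [ha_def]
    nlinarith [h2, h3, htc]
  obtain ⟨ρ, hρ_def⟩ : ∃ ρ : ℝ, ρ = t^2 := ⟨_, rfl⟩
  have hρ0 : 0 < ρ := by rw [hρ_def]; positivity
  have hρ1 : ρ < 1 := by rw [hρ_def]; nlinarith
  have hβρ : β < ρ := by
    rw [hρ_def]
    nlinarith [htsβ, hsβsq, hsβ0, hsβ]
  have hβρ0 : 0 < β + ρ := by linarith
  have ha0 : 0 ≤ a := by rw [ha_def]; linarith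
  have hat0 : 0 ≤ a * t := mul_nonneg ha0 ht0.le
  have hkey2 : a^2 * ρ < (β + ρ)^2 := by
    have h1 : 0 < (β + ρ) - a*t := by rw [hρ_def]; linarith
    have h2 : 0 < (β + ρ) + a*t := by linarith
    have h3 : a^2 * ρ = (a*t)^2 := by rw [hρ_def]; ring
    nlinarith [mul_pos h1 h2]
  obtain ⟨p, hp_def⟩ : ∃ p : ℝ, p = a * β / (β + ρ) := ⟨_, rfl⟩
  have hp : p * (β + ρ) = a * β := by
    rw [hp_def]; field_simp
  obtain ⟨δ, hδ_def⟩ : ∃ δ : ℝ, δ = ρ - (a^2 - 2*p*a + β^2/ρ) := ⟨_, rfl⟩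
  have hδ0 : 0 < δ := by
    have h1 : δ * (ρ * (β + ρ)) = (ρ - β) * ((β + ρ)^2 - a^2 * ρ) := by
      rw [hδ_def, hp_def]; field_simp; ring
    have h2 : 0 < (ρ - β) * ((β + ρ)^2 - a^2 * ρ) :=
      mul_pos (by linarith) (by linarith)
    have h4 : 0 < δ * (ρ * (β + ρ)) := by rw [h1]; exact h2
    have h5 : δ = (δ * (ρ*(β+ρ))) / (ρ*(β+ρ)) := by field_simp
    rw [h5]; exact div_pos h4 (by positivity)
  obtain ⟨q, hq_def⟩ : ∃ q : ℝ, q = β^2/ρ + δ := ⟨_, rfl⟩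
  have hq0 : 0 < q := by
    have h0 : 0 ≤ β^2/ρ := by positivity
    rw [hq_def]; linarith
  have hqp : δ ≤ q - p^2 := by
    have h1 : p^2 * ρ * (β+ρ)^2 = β^2 * (a^2 * ρ) := by
      rw [hp_def]; field_simp
    have h2 : p^2 * ρ ≤ β^2 := by
      nlinarith [mul_pos hβρ0 hβρ0, sq_nonneg β, hkey2, h1, sq_nonneg p]
    have h3 : p^2 ≤ β^2/ρ := by
      rw [le_div_iff₀ hρ0]; linarith
    rw [hq_def]; linarith
  -- Lyapunov function
  obtain ⟨V, hV_def⟩ : ∃ V : ℕ → ℝ, V = fun k => (e k)^2 - 2*p*(e k)*(e (k-1)) + q*(e (k-1))^2 := ⟨_, rfl⟩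
  have hcoeff : a^2 - 2*p*a + q = ρ := by rw [hq_def, hδ_def]; ring
  have hρq : ρ * q - β^2 = ρ * δ := by
    rw [hq_def]; field_simp; ring
  have hcoeff' : (1+β-c)^2 - 2*p*(1+β-c) + q = ρ := by rw [← ha_def]; exact hcoeff
  have hp' : p * (β + ρ) = (1+β-c) * β := by rw [← ha_def]; exact hp
  have hdecay : ∀ k, 1 ≤ k → V (k+1) ≤ ρ * V k := by
    intro k hk
    have hrec := he k hk
    have hsimp : (k + 1 - 1 : ℕ) = k := rfl
    rw [hV_def]
    simp only [hsimp]
    rw [hrec]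
    have hid2 : ρ * ((e k)^2 - 2*p*(e k)*(e (k-1)) + q*(e (k-1))^2)
        - (((1+β-c) * e k - β * e (k-1))^2 - 2*p*((1+β-c) * e k - β * e (k-1))*(e k)
          + q*(e k)^2)
        = ρ * δ * (e (k-1))^2 := by
      linear_combination (-(e k)^2) * hcoeff' + (-2*(e k)*(e (k-1))) * hp'
        + ((e (k-1))^2) * hρq
    have hnn : 0 ≤ ρ * δ * (e (k-1))^2 := by positivity
    linarith [hid2, hnn]
  have hVe : ∀ k, δ * (e k)^2 ≤ q * V k := by
    intro k
    simp only [hV_def]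
    have hid3 : q * ((e k)^2 - 2*p*(e k)*(e (k-1)) + q*(e (k-1))^2) - δ * (e k)^2
        = (q * e (k-1) - p * e k)^2 + (q - p^2 - δ) * (e k)^2 := by ring
    have h1 : 0 ≤ (q * e (k-1) - p * e k)^2 := sq_nonneg _
    have h2 : 0 ≤ (q - p^2 - δ) * (e k)^2 :=
      mul_nonneg (by linarith [hqp]) (sq_nonneg _)
    linarith [hid3, h1, h2]
  have hVgeom : ∀ k, 1 ≤ k → V k ≤ (V 1 / ρ) * ρ^k := by
    intro k hk
    induction k with
    | zero => omega
    | succ n ih =>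
      rcases Nat.eq_zero_or_pos n with rfl | hn
      · rw [pow_one, div_mul_cancel₀ _ (ne_of_gt hρ0)]
      · calc V (n+1) ≤ ρ * V n := hdecay n hn
          _ ≤ ρ * ((V 1 / ρ) * ρ^n) := mul_le_mul_of_nonneg_left (ih hn) hρ0.le
          _ = (V 1 / ρ) * ρ^(n+1) := by ring
  obtain ⟨C, hC_def⟩ : ∃ C : ℝ, C = q / δ * (V 1 / ρ) := ⟨_, rfl⟩
  have hbound : ∀ k, 1 ≤ k → (e k)^2 ≤ C * ρ^k := by
    intro k hk
    have h1 := hVe k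
    have h3 : q * V k ≤ q * ((V 1 / ρ) * ρ^k) :=
      mul_le_mul_of_nonneg_left (hVgeom k hk) hq0.le
    rw [hC_def, div_mul_eq_mul_div, div_mul_eq_mul_div, le_div_iff₀ hδ0]
    calc (e k)^2 * δ = δ * (e k)^2 := by ring
      _ ≤ q * V k := h1
      _ ≤ q * ((V 1 / ρ) * ρ^k) := h3
      _ = q * (V 1 / ρ) * ρ^k := by ring
  have hsq : Tendsto (fun k => (e k)^2) atTop (nhds 0) := by
    have hgeo : Tendsto (fun k : ℕ => C * ρ^k) atTop (nhds 0) := by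
      have := tendsto_pow_atTop_nhds_zero_of_lt_one hρ0.le hρ1
      simpa using this.const_mul C
    apply tendsto_of_tendsto_of_tendsto_of_le_of_le' tendsto_const_nhds hgeo
    · exact Eventually.of_forall (fun k => sq_nonneg _)
    · filter_upwards [eventually_ge_atTop 1] with k hk using hbound k hk
  have habs : Tendsto (fun k => |e k|) atTop (nhds 0) := by
    have := (Real.continuous_sqrt.tendsto 0).comp hsq
    simp only [Function.comp_def, Real.sqrt_sq_eq_abs, Real.sqrt_zero] at this
    exact this
  exact (tendsto_zero_iff_abs_tendsto_zero e).mpr habs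

/-- For the quadratic `f(x) = (1/2)xᵀAx + xᵀb` with `A` symmetric positive definite
(smallest eigenvalue `ν > 0`, largest eigenvalue `L`), the heavy ball iterates
`x^{k+1} = x^k - γ∇f(x^k) + β(x^k - x^{k-1})` with step size `0 < γ ≤ 1/L` and
momentum `0 ≤ β < 1` converge to the minimizer `x* = -A⁻¹b`. -/
theorem heavy_ball_converges_to_minimizer {d : ℕ}
    (A : Matrix (Fin d) (Fin d) ℝ) (hA : A.PosDef) (ν L : ℝ)
    (hν : IsLeast (Set.range hA.1.eigenvalues) ν)
    (hL : IsGreatest (Set.range hA.1.eigenvalues) L)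
    (hν0 : 0 < ν)
    (b : EuclideanSpace ℝ (Fin d)) (γ β : ℝ)
    (hγ0 : 0 < γ) (hγL : γ ≤ 1 / L)
    (hβ0 : 0 ≤ β) (hβ1 : β < 1)
    (x : ℕ → EuclideanSpace ℝ (Fin d))
    (hx : ∀ k, 1 ≤ k →
      x (k + 1) = x k - γ • (Matrix.toEuclideanLin A (x k) + b)
        + β • (x k - x (k - 1)))
    (xstar : EuclideanSpace ℝ (Fin d))
    (hxstar : xstar = -(Matrix.toEuclideanLin A⁻¹ b)) :
    Tendsto x atTop (nhds xstar) := by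
  have hAH := hA.1
  set B := hA.1.eigenvectorBasis with hB_def
  set lam := hA.1.eigenvalues with hlam_def
  -- positivity of eigenvalues and L
  have hlam0 : ∀ i, 0 < lam i := fun i => lt_of_lt_of_le hν0 (hν.2 ⟨i, rfl⟩)
  obtain ⟨i0, hi0⟩ := hL.1
  have hL0 : 0 < L := hi0 ▸ hlam0 i0
  -- fixed point property
  have hdet : IsUnit A.det := isUnit_iff_ne_zero.mpr (ne_of_gt hA.det_pos)
  have hfix : Matrix.toEuclideanLin A xstar = -b := by
    rw [hxstar, map_neg, neg_inj]
    have h1 : A * A⁻¹ = 1 := Matrix.mul_nonsing_inv A hdet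
    rw [Matrix.toEuclideanLin_apply, Matrix.toEuclideanLin_apply]
    simp [Matrix.mulVec_mulVec, h1]
  set y : ℕ → EuclideanSpace ℝ (Fin d) := fun k => x k - xstar with hy_def
  have hyrec : ∀ k, 1 ≤ k →
      y (k+1) = y k - γ • (Matrix.toEuclideanLin A (y k)) + β • (y k - y (k-1)) := by
    intro k hk
    simp only [hy_def]
    rw [hx k hk]
    have hA2 : Matrix.toEuclideanLin A (x k - xstar)
        = Matrix.toEuclideanLin A (x k) + b := by
      rw [map_sub, hfix, sub_neg_eq_add]
    have e1 : (x k - xstar) - (x (k-1) - xstar) = x k - x (k-1) := by abel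
    rw [hA2, e1]
    abel
  -- eigenvector property in toEuclideanLin form
  have hsym := (Matrix.isHermitian_iff_isSymmetric.mp hA.1)
  have heig : ∀ i, Matrix.toEuclideanLin A (B i) = lam i • B i := by
    intro i
    have h := hA.1.mulVec_eigenvectorBasis i
    apply (WithLp.equiv 2 _).injective
    simp only [WithLp.equiv_apply, Matrix.ofLp_toEuclideanLin_apply, WithLp.ofLp_smul]
    exact h
  -- coordinates
  set e : Fin d → ℕ → ℝ := fun i k => (inner ℝ (B i) (y k) : ℝ) with he_def
  have herec : ∀ i, ∀ k, 1 ≤ k →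
      e i (k+1) = (1+β-(γ * lam i)) * e i k - β * e i (k-1) := by
    intro i k hk
    simp only [he_def]
    rw [hyrec k hk]
    have hip : (inner ℝ (B i) (Matrix.toEuclideanLin A (y k)) : ℝ)
        = lam i * (inner ℝ (B i) (y k) : ℝ) := by
      rw [← hsym (B i) (y k), heig i, real_inner_smul_left]
    simp only [inner_add_right, inner_sub_right, inner_smul_right, hip,
      RCLike.ofReal_real_eq_id, id_eq]
    simp only [hy_def, inner_sub_right]
    ring
  have hcoords : ∀ i, Tendsto (e i) atTop (nhds 0) := by
    intro i
    refine hb_scalar β (γ * lam i) hβ0 hβ1 (mul_pos hγ0 (hlam0 i)) ?_ (e i) (herec i)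
    have hlamL : lam i ≤ L := hL.2 ⟨i, rfl⟩
    calc γ * lam i ≤ (1/L) * lam i := mul_le_mul_of_nonneg_right hγL (hlam0 i).le
      _ = lam i / L := by ring
      _ ≤ 1 := (div_le_one hL0).mpr hlamL
  have hy0 : Tendsto y atTop (nhds 0) := by
    have hsum : Tendsto (fun k => ∑ i, (e i k) • (B i)) atTop
        (nhds (∑ i : Fin d, (0:ℝ) • (B i))) :=
      tendsto_finset_sum _ (fun i _ => (hcoords i).smul_const _)
    simp only [zero_smul, Finset.sum_const_zero] at hsum
    exact Tendsto.congr (fun k => B.sum_repr' (y k)) hsum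
  have hfin := hy0.add_const xstar
  rw [zero_add] at hfin
  refine Tendsto.congr (fun k => ?_) hfin
  simp [hy_def]
end
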